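/- Let $c, d$ be coprime integers with $1 < c < d$ and $g = cd - c - d$. The number of integers $m$ with $0 \le m \le g$ that are representable as $cx + dy$ with $x, y$ nonnegative integers equals $(g+1)/2$. -/

import Mathlib

-- uniqueness of canonical representation
lemma sylv_uniq (c d : ℤ) (hc : 0 < c) (hd : 0 < d) (hgcd : IsCoprime c d)
    {x y x' y' : ℤ} (hx : 0 ≤ x) (hxd : x < d) (hx' : 0 ≤ x') (hx'd : x' < d)
    (h : c * x + d * y = c * x' + d * y') : x = x' ∧ y = y' := by
  have hdvd : d ∣ (x - x') * c := ⟨y' - y, by ring_nf; linarith [h]⟩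
  have hdc : IsCoprime d c := hgcd.symm
  have hdvd2 : d ∣ (x - x') := (IsCoprime.dvd_of_dvd_mul_right hdc hdvd)
  have hz : x - x' = 0 := Int.eq_zero_of_abs_lt_dvd hdvd2 (by rw [abs_lt]; omega)
  have hxe : x = x' := by omega
  constructor
  · exact hxe
  · subst hxe
    have : d * y = d * y' := by linarith
    exact mul_left_cancel₀ (by omega) this

lemma sylv_canon (c d : ℤ) (hc : 0 < c) (hd : 0 < d) (hgcd : IsCoprime c d)
    (m : ℤ) : ∃ x y : ℤ, 0 ≤ x ∧ x < d ∧ m = c * x + d * y := by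
  obtain ⟨u, v, huv⟩ := hgcd
  refine ⟨(m * u) % d, m * v + ((m * u) / d) * c, Int.emod_nonneg _ (by omega),
    Int.emod_lt_of_pos _ hd, ?_⟩
  have h1 : (m * u) % d = m * u - d * ((m * u) / d) := Int.emod_def _ _
  rw [h1]
  have : m = m * (u * c + v * d) := by rw [huv]; ring
  nlinarith [this]

lemma sylv_rep_iff (c d : ℤ) (hc : 0 < c) (hd : 0 < d) (hgcd : IsCoprime c d)
    {m x y : ℤ} (hx : 0 ≤ x) (hxd : x < d) (hm : m = c * x + d * y) :
    (∃ a b : ℤ, 0 ≤ a ∧ 0 ≤ b ∧ m = c * a + d * b) ↔ 0 ≤ y := by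
  constructor
  · rintro ⟨a, b, ha, hb, hab⟩
    have hq : 0 ≤ a / d := Int.ediv_nonneg ha (by omega)
    have hr0 : 0 ≤ a % d := Int.emod_nonneg _ (by omega)
    have hrd : a % d < d := Int.emod_lt_of_pos _ hd
    have hmd : a % d = a - d * (a / d) := Int.emod_def _ _
    have heq : c * x + d * y = c * (a % d) + d * (b + (a / d) * c) := by
      rw [hmd, ← hm, hab]; ring
    obtain ⟨h1, h2⟩ := sylv_uniq c d hc hd hgcd hx hxd hr0 hrd heq
    have : 0 ≤ b + (a / d) * c := by positivity
    omega
  · intro hy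
    exact ⟨x, y, hx, hy, hm⟩

lemma sylv_key (c d : ℤ) (hc : 0 < c) (hd : 0 < d) (hgcd : IsCoprime c d)
    (m : ℤ) :
    (∃ a b : ℤ, 0 ≤ a ∧ 0 ≤ b ∧ m = c * a + d * b) ↔
      ¬ (∃ a b : ℤ, 0 ≤ a ∧ 0 ≤ b ∧ (c * d - c - d - m) = c * a + d * b) := by
  obtain ⟨x, y, hx, hxd, hm⟩ := sylv_canon c d hc hd hgcd m
  rw [sylv_rep_iff c d hc hd hgcd hx hxd hm]
  have hm' : c * d - c - d - m = c * (d - 1 - x) + d * (-1 - y) := by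
    rw [hm]; ring
  rw [sylv_rep_iff c d hc hd hgcd (by omega) (by omega) hm']
  omega

theorem sylvester_count (c d : ℤ) (hc : 1 < c) (hcd : c < d)
    (hgcd : IsCoprime c d) :
    ({m : ℤ | 0 ≤ m ∧ m ≤ c * d - c - d ∧
        ∃ x y : ℤ, 0 ≤ x ∧ 0 ≤ y ∧ m = c * x + d * y}.ncard : ℤ)
      = ((c * d - c - d) + 1) / 2 := by
  classical
  set g : ℤ := c * d - c - d with hg
  have hc0 : 0 < c := by omega
  have hd0 : 0 < d := by omega
  have hg0 : 0 < g := by nlinarith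
  set P : ℤ → Prop := fun m => ∃ x y : ℤ, 0 ≤ x ∧ 0 ≤ y ∧ m = c * x + d * y with hP
  have hset : {m : ℤ | 0 ≤ m ∧ m ≤ g ∧ P m} = ↑((Finset.Icc 0 g).filter P) := by
    ext m; simp [and_assoc]
  rw [hset, Set.ncard_coe_finset]
  have hbij : ((Finset.Icc 0 g).filter P).card
      = ((Finset.Icc 0 g).filter (fun m => ¬ P m)).card := by
    apply Finset.card_nbij' (fun m => g - m) (fun m => g - m)
    · intro a ha
      simp only [Finset.mem_coe, Finset.mem_filter, Finset.mem_Icc] at ha ⊢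
      refine ⟨⟨by omega, by omega⟩, ?_⟩
      exact (sylv_key c d hc0 hd0 hgcd a).mp ha.2
    · intro b hb
      simp only [Finset.mem_coe, Finset.mem_filter, Finset.mem_Icc] at hb ⊢
      refine ⟨⟨by omega, by omega⟩, ?_⟩
      by_contra hnp
      exact hb.2 ((sylv_key c d hc0 hd0 hgcd b).mpr hnp)
    · intro a _; dsimp only; omega
    · intro b _; dsimp only; omega
  have hsum : ((Finset.Icc 0 g).filter P).card
      + ((Finset.Icc 0 g).filter (fun m => ¬ P m)).card = (Finset.Icc 0 g).card :=
    Finset.card_filter_add_card_filter_not (p := P)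
  have hcard : (Finset.Icc 0 g).card = (g + 1).toNat := by
    rw [Int.card_Icc]; congr 1; omega
  have h2 : 2 * (((Finset.Icc 0 g).filter P).card : ℤ) = g + 1 := by
    rw [hbij] at hsum ⊢
    omega
  omega
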